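/- Let F be the distribution function of a real-valued random variable. Then the Lebesgue measure of I := ∪_{[x,y] ∈ I^max} [x,y], the union of all maximal 'bad' intervals for F, is at most 1. -/

import Mathlib

open Filter MeasureTheory

/-- For `x < y`, the interval `[x,y]` is a 'bad' interval for `F` if `F(y) - F(x) ≥ y - x`. -/
def IsBad (F : ℝ → ℝ) (x y : ℝ) : Prop := x < y ∧ y - x ≤ F y - F x

/-- `[x,y]` is a maximal 'bad' interval for `F` if it is bad and every bad interval is
either contained in it or disjoint from it. -/
def IsMaxBad (F : ℝ → ℝ) (x y : ℝ) : Prop :=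
  IsBad F x y ∧ ∀ a b, IsBad F a b →
    Set.Icc a b ⊆ Set.Icc x y ∨ Set.Icc a b ∩ Set.Icc x y = ∅

/-- The union `I` of all maximal 'bad' intervals of `F`. -/
def badUnion (F : ℝ → ℝ) : Set ℝ :=
  {t | ∃ x y, IsMaxBad F x y ∧ t ∈ Set.Icc x y}

/-- **Lemma (i).** If `F` is a distribution function (nondecreasing, with values in
`[0,1]`, right-continuous, with limits `0` at `-∞` and `1` at `+∞`), then the Lebesgue
measure of the union `I` of all maximal 'bad' intervals for `F` is at most `1`. -/
theorem stmt_7 (F : ℝ → ℝ) (hmono : Monotone F)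
    (hrange : ∀ t, F t ∈ Set.Icc (0 : ℝ) 1)
    (hrc : ∀ t, ContinuousWithinAt F (Set.Ici t) t)
    (hbot : Tendsto F atBot (nhds 0)) (htop : Tendsto F atTop (nhds 1)) :
    volume (badUnion F) ≤ 1 := by
  classical
  set f : StieltjesFunction ℝ := ⟨F, hmono, hrc⟩ with hf
  set T : Set (ℝ × ℝ) := {p | IsMaxBad F p.1 p.2} with hT
  have hmem : ∀ p : ℝ × ℝ, p ∈ T → IsMaxBad F p.1 p.2 := fun p hp => hp
  -- disjointness of distinct maximal intervals
  have hdisj : ∀ p ∈ T, ∀ q ∈ T, p ≠ q →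
      Set.Icc p.1 p.2 ∩ Set.Icc q.1 q.2 = ∅ := by
    intro p hp q hq hne
    have hp' := hmem p hp
    have hq' := hmem q hq
    rcases hq'.2 p.1 p.2 hp'.1 with h1 | h1
    · rcases hp'.2 q.1 q.2 hq'.1 with h2 | h2
      · exfalso
        have hxy : p.1 ≤ p.2 := hp'.1.1.le
        have hab : q.1 ≤ q.2 := hq'.1.1.le
        have e1 := (Set.Icc_subset_Icc_iff hxy).mp h1
        have e2 := (Set.Icc_subset_Icc_iff hab).mp h2
        exact hne (Prod.ext (le_antisymm e2.1 e1.1) (le_antisymm e1.2 e2.2))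
      · rw [Set.inter_comm] at h2; exact h2
    · exact h1
  -- countability of T
  have hc : T.Countable := by
    have hex : ∀ p : T, ∃ q : ℚ, (p : ℝ × ℝ).1 < (q : ℝ) ∧ (q : ℝ) < (p : ℝ × ℝ).2 :=
      fun p => exists_rat_btwn (hmem _ p.2).1.1
    choose g hg1 hg2 using hex
    have hginj : Function.Injective g := by
      intro p q h
      by_contra hne
      have hpq : (p : ℝ × ℝ) ≠ (q : ℝ × ℝ) := fun h' => hne (Subtype.ext h')
      have hd := hdisj _ p.2 _ q.2 hpq
      have hm : ((g p : ℝ)) ∈ Set.Icc (p : ℝ × ℝ).1 (p : ℝ × ℝ).2 ∩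
          Set.Icc (q : ℝ × ℝ).1 (q : ℝ × ℝ).2 := by
        refine ⟨⟨(hg1 p).le, (hg2 p).le⟩, ?_⟩
        rw [h]
        exact ⟨(hg1 q).le, (hg2 q).le⟩
      rw [hd] at hm
      exact hm
    exact Set.countable_coe_iff.mp (hginj.countable)
  have : Countable T := hc.to_subtype
  -- badUnion as a union over T
  have hU : badUnion F = ⋃ p ∈ T, Set.Icc p.1 p.2 := by
    ext t
    simp only [badUnion, Set.mem_setOf_eq, Set.mem_iUnion]
    constructor
    · rintro ⟨x, y, hxy, ht⟩
      exact ⟨(x, y), hxy, ht⟩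
    · rintro ⟨p, hp, ht⟩
      exact ⟨p.1, p.2, hmem p hp, ht⟩
  have hdisj' : Pairwise (Function.onFun Disjoint
      (fun p : T => Set.Ioc (p : ℝ × ℝ).1 (p : ℝ × ℝ).2)) := by
    intro p q hpq
    have hpq' : (p : ℝ × ℝ) ≠ (q : ℝ × ℝ) := fun h' => hpq (Subtype.ext h')
    have hd := hdisj _ p.2 _ q.2 hpq'
    refine Set.disjoint_left.mpr fun t htp htq => ?_
    have : t ∈ Set.Icc (p : ℝ × ℝ).1 (p : ℝ × ℝ).2 ∩
        Set.Icc (q : ℝ × ℝ).1 (q : ℝ × ℝ).2 :=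
      ⟨Set.Ioc_subset_Icc_self htp, Set.Ioc_subset_Icc_self htq⟩
    rw [hd] at this
    exact this
  calc volume (badUnion F)
      ≤ ∑' p : T, volume (Set.Icc (p : ℝ × ℝ).1 (p : ℝ × ℝ).2) := by
        rw [hU]; exact measure_biUnion_le volume hc _
    _ ≤ ∑' p : T, f.measure (Set.Ioc (p : ℝ × ℝ).1 (p : ℝ × ℝ).2) := by
        refine ENNReal.tsum_le_tsum fun p => ?_
        rw [Real.volume_Icc, f.measure_Ioc]
        exact ENNReal.ofReal_le_ofReal (hmem _ p.2).1.2
    _ = f.measure (⋃ p : T, Set.Ioc (p : ℝ × ℝ).1 (p : ℝ × ℝ).2) :=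
        (measure_iUnion hdisj' fun p => measurableSet_Ioc).symm
    _ ≤ f.measure Set.univ := measure_mono (Set.subset_univ _)
    _ = 1 := by rw [f.measure_univ hbot htop]; norm_num
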